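/- For all real numbers λ1111, λ1112, λ1122, λ1222, λ2222 there exists θ0 ∈ [0, 2π) such that f(θ0) = 0, where f(θ) = (1/2)(cos 2θ + cos 4θ)·λ1112 + 4 cos³θ sin θ·λ1111 − 4 cos θ sin³θ·λ2222 + sin θ sin 3θ·λ1222 − (1/2) sin 4θ·λ1122. -/
import Mathlib


open Real

private noncomputable def Fc (l1111 l1112 l1122 l1222 l2222 θ : ℝ) : ℝ :=
  (1/2) * (Real.cos (2 * θ) + Real.cos (4 * θ)) * l1112
    + 4 * (Real.cos θ)^3 * Real.sin θ * l1111
    - 4 * Real.cos θ * (Real.sin θ)^3 * l2222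
    + Real.sin θ * Real.sin (3 * θ) * l1222
    - (1/2) * Real.sin (4 * θ) * l1122

private lemma Fc_cont (a b c d e : ℝ) : Continuous (Fc a b c d e) := by
  unfold Fc; fun_prop

private lemma cos_3pi4 : Real.cos (3*π/4) = -(Real.sqrt 2 / 2) := by
  have : (3:ℝ)*π/4 = π - π/4 := by ring
  rw [this, Real.cos_pi_sub, Real.cos_pi_div_four]

private lemma sin_3pi4 : Real.sin (3*π/4) = Real.sqrt 2 / 2 := by
  have : (3:ℝ)*π/4 = π - π/4 := by ring
  rw [this, Real.sin_pi_sub, Real.sin_pi_div_four]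

private lemma sin_3pi4' : Real.sin (3 * (π/4)) = Real.sqrt 2 / 2 := by
  have : (3:ℝ) * (π/4) = 3*π/4 := by ring
  rw [this, sin_3pi4]

private lemma cos_2_3pi4 : Real.cos (2 * (3*π/4)) = 0 := by
  have : (2:ℝ) * (3*π/4) = π + π/2 := by ring
  rw [this, Real.cos_add, Real.sin_pi, Real.cos_pi, Real.cos_pi_div_two]; ring

private lemma cos_3pi : Real.cos (4 * (3*π/4)) = -1 := by
  have : (4:ℝ) * (3*π/4) = π + 2*π := by ring
  rw [this, Real.cos_add_two_pi, Real.cos_pi]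

private lemma sin_3pi2 : Real.sin (3 * (π/2)) = -1 := by
  have : (3:ℝ) * (π/2) = π + π/2 := by ring
  rw [this, Real.sin_add, Real.sin_pi, Real.cos_pi, Real.sin_pi_div_two]; ring

private lemma cos_3pi2 : Real.cos (3 * (π/2)) = 0 := by
  have : (3:ℝ) * (π/2) = π + π/2 := by ring
  rw [this, Real.cos_add, Real.sin_pi, Real.cos_pi, Real.cos_pi_div_two]; ring

private lemma sin_9pi4 : Real.sin (3 * (3*π/4)) = Real.sqrt 2 / 2 := by
  have : (3:ℝ) * (3*π/4) = π/4 + 2*π := by ring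
  rw [this, Real.sin_add_two_pi, Real.sin_pi_div_four]

private lemma sin_3pi : Real.sin (4 * (3*π/4)) = 0 := by
  have : (4:ℝ) * (3*π/4) = π + 2*π := by ring
  rw [this, Real.sin_add_two_pi, Real.sin_pi]

private lemma Fc_sum (a b c d e : ℝ) :
    Fc a b c d e 0 + Fc a b c d e (π/4) + Fc a b c d e (π/2) + Fc a b c d e (3*π/4) = 0 := by
  have s2 : Real.sqrt 2 ^ 2 = 2 := Real.sq_sqrt (by norm_num)
  have h0 : Fc a b c d e 0 = b := by
    simp [Fc]; ring
  have h1 : Fc a b c d e (π/4) = a - b/2 + d/2 - e := by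
    unfold Fc
    have e2 : (2:ℝ) * (π/4) = π/2 := by ring
    have e4 : (4:ℝ) * (π/4) = π := by ring
    rw [e2, e4, Real.cos_pi_div_two, Real.cos_pi, Real.sin_pi,
      Real.cos_pi_div_four, Real.sin_pi_div_four, sin_3pi4']
    linear_combination ((Real.sqrt 2 ^ 2 + 2)/4*(a-e) + d/4) * s2
  have h2 : Fc a b c d e (π/2) = -d := by
    unfold Fc
    have e2 : (2:ℝ) * (π/2) = π := by ring
    have e4 : (4:ℝ) * (π/2) = 2*π := by ring
    rw [e2, e4, Real.cos_pi, Real.sin_two_pi, Real.cos_two_pi,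
      Real.cos_pi_div_two, Real.sin_pi_div_two, sin_3pi2]
    ring
  have h3 : Fc a b c d e (3*π/4) = -a - b/2 + d/2 + e := by
    unfold Fc
    rw [cos_2_3pi4, cos_3pi, sin_3pi, sin_9pi4, cos_3pi4, sin_3pi4]
    linear_combination ((Real.sqrt 2 ^ 2 + 2)/4*(e-a) + d/4) * s2
  rw [h0, h1, h2, h3]; ring

private lemma ivt_aux (a b c d e : ℝ) {x y : ℝ}
    (hx : x ∈ Set.Icc (0:ℝ) (3*π/4)) (hy : y ∈ Set.Icc (0:ℝ) (3*π/4))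
    (h1 : Fc a b c d e x ≤ 0) (h2 : 0 ≤ Fc a b c d e y) :
    ∃ θ0 ∈ Set.Ico (0:ℝ) (2*π), Fc a b c d e θ0 = 0 := by
  have := intermediate_value_uIcc (Continuous.continuousOn (Fc_cont a b c d e)
    (s := Set.uIcc x y))
  have h0 : (0:ℝ) ∈ Set.uIcc (Fc a b c d e x) (Fc a b c d e y) :=
    Set.mem_uIcc.mpr (Or.inl ⟨h1, h2⟩)
  obtain ⟨z, hz, hfz⟩ := this h0
  refine ⟨z, ?_, hfz⟩
  have hsub : Set.uIcc x y ⊆ Set.Icc (0:ℝ) (3*π/4) := by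
    rw [Set.uIcc]
    exact Set.Icc_subset_Icc (le_min hx.1 hy.1) (max_le hx.2 hy.2)
  have hz' := hsub hz
  have hπ := Real.pi_pos
  exact ⟨hz'.1, lt_of_le_of_lt hz'.2 (by linarith)⟩

/-- The quartic singlet coupling `λ̃1112` of the SM+2S scalar potential after an
`SO(2)` rotation of the two real singlets by angle `θ` (with `δ = +1`) can always
be rotated to zero: for all values of the quartic couplings there is
`θ0 ∈ [0, 2π)` at which it vanishes. -/
theorem stmt_0 (l1111 l1112 l1122 l1222 l2222 : ℝ) :
    ∃ θ0 ∈ Set.Ico (0 : ℝ) (2 * π),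
      (1/2) * (Real.cos (2 * θ0) + Real.cos (4 * θ0)) * l1112
        + 4 * (Real.cos θ0)^3 * Real.sin θ0 * l1111
        - 4 * Real.cos θ0 * (Real.sin θ0)^3 * l2222
        + Real.sin θ0 * Real.sin (3 * θ0) * l1222
        - (1/2) * Real.sin (4 * θ0) * l1122 = 0 := by
  set a := l1111; set b := l1112; set c := l1122; set d := l1222; set e := l2222
  suffices h : ∃ θ0 ∈ Set.Ico (0:ℝ) (2*π), Fc a b c d e θ0 = 0 by
    obtain ⟨θ0, h1, h2⟩ := h
    exact ⟨θ0, h1, h2⟩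
  have hπ := Real.pi_pos
  have m0 : (0:ℝ) ∈ Set.Icc (0:ℝ) (3*π/4) := by constructor <;> linarith
  have m1 : (π/4) ∈ Set.Icc (0:ℝ) (3*π/4) := by constructor <;> linarith
  have m2 : (π/2) ∈ Set.Icc (0:ℝ) (3*π/4) := by constructor <;> linarith
  have m3 : (3*π/4) ∈ Set.Icc (0:ℝ) (3*π/4) := by constructor <;> linarith
  have key := Fc_sum a b c d e
  rcases le_total (Fc a b c d e 0) 0 with h0 | h0
  · have : 0 ≤ Fc a b c d e (π/4) ∨ 0 ≤ Fc a b c d e (π/2) ∨ 0 ≤ Fc a b c d e (3*π/4) := by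
      by_contra h; push_neg at h; obtain ⟨u, v, w⟩ := h; linarith
    rcases this with h | h | h
    · exact ivt_aux a b c d e m0 m1 h0 h
    · exact ivt_aux a b c d e m0 m2 h0 h
    · exact ivt_aux a b c d e m0 m3 h0 h
  · have : Fc a b c d e (π/4) ≤ 0 ∨ Fc a b c d e (π/2) ≤ 0 ∨ Fc a b c d e (3*π/4) ≤ 0 := by
      by_contra h; push_neg at h; obtain ⟨u, v, w⟩ := h; linarith
    rcases this with h | h | h
    · exact ivt_aux a b c d e m1 m0 h h0
    · exact ivt_aux a b c d e m2 m0 h h0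
    · exact ivt_aux a b c d e m3 m0 h h0
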